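/- Let p, q ≥ 1, δ, γ > 0, m = max{1/δ, 1, 1/γ}, λ > 0, ω_Y, ω_YX ∈ (0,1), and α > 0. Let Θ⋆ = [[S⋆−L⋆, Θ⋆_YX],[(Θ⋆_YX)ᵀ, Θ⋆_X]] be a positive-definite symmetric (p+q)×(p+q) matrix with S⋆, L⋆ ∈ S^p, Σ⋆ = (Θ⋆)⁻¹, ψ = ‖Σ⋆‖₂. Let ℍ⋆ = Ω(S⋆) × T(L⋆) × T(Θ⋆_YX) × S^q with componentwise Frobenius-orthogonal projection P_{ℍ⋆}, and let A = 𝒜† ∘ 𝕀⋆ ∘ 𝒜 where 𝕀⋆(M) = Σ⋆MΣ⋆. Assume the minimum-gain condition: Φ_{δ,γ}(P_{ℍ⋆}(A(Z))) ≥ α·Φ_{δ,γ}(Z) for every Z ∈ ℍ⋆. Let Δ = (Δ_S, Δ_L, Δ_K, Δ_O) ∈ S^p × S^p × ℝ^{p×q} × S^q satisfy: (a) support(Δ_S) ⊆ support(S⋆); (b) ‖Δ_L − P_{T(L⋆)}(Δ_L)‖₂ ≤ ω_Y·λ/(2mψ²); (c) ‖Δ_K − P_{T(Θ⋆_YX)}(Δ_K)‖₂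 ≤ ω_YX·λ/(2mψ²); (d) Φ_{δ,γ}(A(Δ)) ≤ 5λ. Then Φ_{δ,γ}(Δ) ≤ (12/α + 1/ψ²)·λ. -/

import Mathlib

open Matrix

noncomputable section

/-- Spectral norm (largest singular value / ℓ2→ℓ2 operator norm) of a real matrix. -/
def sNorm {m n : Type*} [Fintype m] [Fintype n] [DecidableEq m] [DecidableEq n]
    (M : Matrix m n ℝ) : ℝ :=
  ‖(Matrix.toEuclideanLin M).toContinuousLinearMap‖

/-- Entrywise sup norm `‖M‖_{ℓ∞} = max_{i,j} |M_{ij}|`. -/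
def linf {m n : Type*} [Fintype m] [Fintype n] (M : Matrix m n ℝ) : ℝ :=
  ⨆ i, ⨆ j, |M i j|

/-- The orthogonal-projection matrix onto a subspace of Euclidean space. -/
def projMat {n : ℕ} (V : Submodule ℝ (EuclideanSpace ℝ (Fin n))) : Matrix (Fin n) (Fin n) ℝ :=
  Matrix.toEuclideanLin.symm (V.subtype ∘ₗ (V.orthogonalProjectionOnto).toLinearMap)

/-- Column space of a matrix, as a subspace of Euclidean space. -/
def colSpace {m n : ℕ} (N : Matrix (Fin m) (Fin n) ℝ) : Submodule ℝ (EuclideanSpace ℝ (Fin m)) :=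
  LinearMap.range (Matrix.toEuclideanLin N)

/-- Frobenius-orthogonal projection onto the tangent space `T(N)`:
`M ↦ P_c M + M P_r − P_c M P_r` with `P_c`, `P_r` the orthogonal projections onto the column
and row spaces of `N`. -/
def tanProj {m n : ℕ} (N M : Matrix (Fin m) (Fin n) ℝ) : Matrix (Fin m) (Fin n) ℝ :=
  projMat (colSpace N) * M + M * projMat (colSpace Nᵀ) -
    projMat (colSpace N) * M * projMat (colSpace Nᵀ)

/-- Frobenius-orthogonal projection onto `Ω(S⋆)`: zero the entries outside the support. -/
def suppProj {p : ℕ} (Sstar S : Matrix (Fin p) (Fin p) ℝ) : Matrix (Fin p) (Fin p) ℝ :=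
  Matrix.of fun i j => if Sstar i j = 0 then 0 else S i j

/-- An element of `S^p × S^p × ℝ^{p×q} × S^q` (symmetry imposed separately). -/
abbrev Quad (p q : ℕ) :=
  Matrix (Fin p) (Fin p) ℝ × Matrix (Fin p) (Fin p) ℝ ×
    Matrix (Fin p) (Fin q) ℝ × Matrix (Fin q) (Fin q) ℝ

/-- The norm `Φ_{δ,γ}(S,L,K,O) = max{‖S‖_{ℓ∞}/δ, ‖L‖₂, ‖K‖₂/γ, ‖O‖₂}`. -/
def Phi {p q : ℕ} (δ γ : ℝ) (Z : Quad p q) : ℝ :=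
  max (max (linf Z.1 / δ) (sNorm Z.2.1)) (max (sNorm Z.2.2.1 / γ) (sNorm Z.2.2.2))

/-- The linear map `𝒜(S,L,K,O) = [[S−L, K],[Kᵀ, O]]`. -/
def calA {p q : ℕ} (Z : Quad p q) : Matrix (Fin p ⊕ Fin q) (Fin p ⊕ Fin q) ℝ :=
  Matrix.fromBlocks (Z.1 - Z.2.1) Z.2.2.1 (Z.2.2.1)ᵀ Z.2.2.2

/-- The adjoint `𝒜†([[Q, K],[Kᵀ, O]]) = (Q, Q, K, O)`. -/
def calAdag {p q : ℕ} (M : Matrix (Fin p ⊕ Fin q) (Fin p ⊕ Fin q) ℝ) : Quad p q :=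
  (M.toBlocks₁₁, M.toBlocks₁₁, M.toBlocks₁₂, M.toBlocks₂₂)

/-- `A = 𝒜† ∘ 𝕀⋆ ∘ 𝒜`, where `𝕀⋆(M) = Σ⋆MΣ⋆` is the Fisher information at `Θ⋆`. -/
def fisherA {p q : ℕ} (Sigstar : Matrix (Fin p ⊕ Fin q) (Fin p ⊕ Fin q) ℝ) (Z : Quad p q) :
    Quad p q :=
  calAdag (Sigstar * calA Z * Sigstar)

/-- Componentwise Frobenius-orthogonal projection onto
`ℍ⋆ = Ω(S⋆) × T(L⋆) × T(Θ⋆_YX) × S^q`. -/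
def projHstar {p q : ℕ} (Sstar Lstar : Matrix (Fin p) (Fin p) ℝ)
    (Kstar : Matrix (Fin p) (Fin q) ℝ) (Z : Quad p q) : Quad p q :=
  (suppProj Sstar Z.1, tanProj Lstar Z.2.1, tanProj Kstar Z.2.2.1, Z.2.2.2)

/-- Membership of `Z` in `ℍ⋆ = Ω(S⋆) × T(L⋆) × T(Θ⋆_YX) × S^q`. -/
def memHstar {p q : ℕ} (Sstar Lstar : Matrix (Fin p) (Fin p) ℝ)
    (Kstar : Matrix (Fin p) (Fin q) ℝ) (Z : Quad p q) : Prop :=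
  Z.1.IsSymm ∧ suppProj Sstar Z.1 = Z.1 ∧
    Z.2.1.IsSymm ∧ tanProj Lstar Z.2.1 = Z.2.1 ∧
    tanProj Kstar Z.2.2.1 = Z.2.2.1 ∧ Z.2.2.2.IsSymm

section helpers

variable {m n k : Type*} [Fintype m] [Fintype n] [Fintype k]
  [DecidableEq m] [DecidableEq n] [DecidableEq k]

lemma sNorm_nonneg (M : Matrix m n ℝ) : 0 ≤ sNorm M := norm_nonneg _

lemma toEL_apply_norm_le (M : Matrix m n ℝ) (v : EuclideanSpace ℝ n) :
    ‖Matrix.toEuclideanLin M v‖ ≤ sNorm M * ‖v‖ := by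
  have := (Matrix.toEuclideanLin M).toContinuousLinearMap.le_opNorm v
  simpa [sNorm] using this

lemma sNorm_le_bound (M : Matrix m n ℝ) (c : ℝ) (hc : 0 ≤ c)
    (h : ∀ v : EuclideanSpace ℝ n, ‖Matrix.toEuclideanLin M v‖ ≤ c * ‖v‖) :
    sNorm M ≤ c := by
  apply ContinuousLinearMap.opNorm_le_bound _ hc
  intro v; simpa using h v

lemma sNorm_mul_le (A : Matrix m n ℝ) (B : Matrix n k ℝ) :
    sNorm (A * B) ≤ sNorm A * sNorm B := by
  apply sNorm_le_bound _ _ (mul_nonneg (sNorm_nonneg A) (sNorm_nonneg B))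
  intro v
  have h1 : Matrix.toEuclideanLin (A * B) v = Matrix.toEuclideanLin A (Matrix.toEuclideanLin B v) := by
    simp [Matrix.toEuclideanLin_apply, Matrix.mulVec_mulVec]
  rw [h1, mul_assoc]
  calc ‖Matrix.toEuclideanLin A (Matrix.toEuclideanLin B v)‖
      ≤ sNorm A * ‖Matrix.toEuclideanLin B v‖ := toEL_apply_norm_le _ _
    _ ≤ sNorm A * (sNorm B * ‖v‖) :=
        mul_le_mul_of_nonneg_left (toEL_apply_norm_le _ _) (sNorm_nonneg A)

lemma sNorm_add_le (A B : Matrix m n ℝ) : sNorm (A + B) ≤ sNorm A + sNorm B := by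
  apply sNorm_le_bound _ _ (add_nonneg (sNorm_nonneg A) (sNorm_nonneg B))
  intro v
  rw [map_add, add_mul]
  exact (norm_add_le _ _).trans (add_le_add (toEL_apply_norm_le _ _) (toEL_apply_norm_le _ _))

lemma sNorm_neg (A : Matrix m n ℝ) : sNorm (-A) = sNorm A := by
  unfold sNorm; rw [map_neg, map_neg, norm_neg]

lemma sNorm_transpose (A : Matrix m n ℝ) : sNorm Aᵀ = sNorm A := by
  have h : Aᵀ = Aᴴ := by ext i j; simp [Matrix.conjTranspose_apply]
  rw [h]
  unfold sNorm
  rw [Matrix.toEuclideanLin_conjTranspose_eq_adjoint,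
    LinearMap.adjoint_toContinuousLinearMap]
  exact ContinuousLinearMap.adjoint.norm_map _

lemma sNorm_eq_zero_iff (A : Matrix m n ℝ) : sNorm A = 0 ↔ A = 0 := by
  unfold sNorm
  rw [norm_eq_zero]
  constructor
  · intro h
    have h2 : Matrix.toEuclideanLin A = 0 := by
      have := congrArg ContinuousLinearMap.toLinearMap h
      simpa using this
    exact Matrix.toEuclideanLin.injective (a₂ := (0 : Matrix m n ℝ)) (by simpa using h2)
  · intro h; subst h; ext v; simp

lemma toEL_coord (M : Matrix m n ℝ) (v : EuclideanSpace ℝ n) (i : m) :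
    (Matrix.toEuclideanLin M v) i = ∑ j, M i j * v j := by
  simp [Matrix.toEuclideanLin_apply, Matrix.mulVec, dotProduct]

lemma enorm_sq (x : EuclideanSpace ℝ n) : ‖x‖^2 = ∑ i, (x i)^2 := by
  rw [EuclideanSpace.norm_eq, Real.sq_sqrt (by positivity)]
  simp [sq_abs]

lemma norm_le_of_sq_le {x c : ℝ} (hx : 0 ≤ x) (hc : 0 ≤ c) (h : x^2 ≤ c^2) : x ≤ c := by
  nlinarith

section blocks
variable {a b c d : Type*} [Fintype a] [Fintype b] [Fintype c] [Fintype d]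
  [DecidableEq a] [DecidableEq b] [DecidableEq c] [DecidableEq d]

/-- extension of `v` by zero on the second summand -/
def ext1 (v : EuclideanSpace ℝ c) : EuclideanSpace ℝ (c ⊕ d) :=
  (WithLp.equiv 2 ((c ⊕ d) → ℝ)).symm (Sum.elim (fun i => v i) (fun _ => 0))

def ext2 (v : EuclideanSpace ℝ d) : EuclideanSpace ℝ (c ⊕ d) :=
  (WithLp.equiv 2 ((c ⊕ d) → ℝ)).symm (Sum.elim (fun _ => 0) (fun i => v i))

@[simp] lemma ext1_inl (v : EuclideanSpace ℝ c) (i : c) : (ext1 (d := d) v) (Sum.inl i) = v i := rfl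
@[simp] lemma ext1_inr (v : EuclideanSpace ℝ c) (j : d) : (ext1 (d := d) v) (Sum.inr j) = 0 := rfl
@[simp] lemma ext2_inl (v : EuclideanSpace ℝ d) (i : c) : (ext2 (c := c) v) (Sum.inl i) = 0 := rfl
@[simp] lemma ext2_inr (v : EuclideanSpace ℝ d) (j : d) : (ext2 (c := c) v) (Sum.inr j) = v j := rfl

lemma norm_ext1 (v : EuclideanSpace ℝ c) : ‖ext1 (d := d) v‖ = ‖v‖ := by
  rw [EuclideanSpace.norm_eq, EuclideanSpace.norm_eq]
  congr 1
  rw [Fintype.sum_sum_type]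
  simp

lemma norm_ext2 (v : EuclideanSpace ℝ d) : ‖ext2 (c := c) v‖ = ‖v‖ := by
  rw [EuclideanSpace.norm_eq, EuclideanSpace.norm_eq]
  congr 1
  rw [Fintype.sum_sum_type]
  simp

lemma toEL_ext1_coord_inl (M : Matrix (a ⊕ b) (c ⊕ d) ℝ) (v : EuclideanSpace ℝ c) (i : a) :
    (Matrix.toEuclideanLin M (ext1 v)) (Sum.inl i)
      = (Matrix.toEuclideanLin M.toBlocks₁₁ v) i := by
  rw [toEL_coord, toEL_coord, Fintype.sum_sum_type]
  simp [Matrix.toBlocks₁₁]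

lemma toEL_ext1_coord_inr (M : Matrix (a ⊕ b) (c ⊕ d) ℝ) (v : EuclideanSpace ℝ c) (i : b) :
    (Matrix.toEuclideanLin M (ext1 v)) (Sum.inr i)
      = (Matrix.toEuclideanLin M.toBlocks₂₁ v) i := by
  rw [toEL_coord, toEL_coord, Fintype.sum_sum_type]
  simp [Matrix.toBlocks₂₁]

lemma toEL_ext2_coord_inl (M : Matrix (a ⊕ b) (c ⊕ d) ℝ) (v : EuclideanSpace ℝ d) (i : a) :
    (Matrix.toEuclideanLin M (ext2 v)) (Sum.inl i)
      = (Matrix.toEuclideanLin M.toBlocks₁₂ v) i := by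
  rw [toEL_coord, toEL_coord, Fintype.sum_sum_type]
  simp [Matrix.toBlocks₁₂]

lemma toEL_ext2_coord_inr (M : Matrix (a ⊕ b) (c ⊕ d) ℝ) (v : EuclideanSpace ℝ d) (i : b) :
    (Matrix.toEuclideanLin M (ext2 v)) (Sum.inr i)
      = (Matrix.toEuclideanLin M.toBlocks₂₂ v) i := by
  rw [toEL_coord, toEL_coord, Fintype.sum_sum_type]
  simp [Matrix.toBlocks₂₂]

lemma sNorm_toBlocks₁₁_le (M : Matrix (a ⊕ b) (c ⊕ d) ℝ) : sNorm M.toBlocks₁₁ ≤ sNorm M := by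
  apply sNorm_le_bound _ _ (sNorm_nonneg M)
  intro v
  apply norm_le_of_sq_le (norm_nonneg _) (mul_nonneg (sNorm_nonneg M) (norm_nonneg v))
  rw [mul_pow, ← norm_ext1 (d := d) v, ← mul_pow]
  calc ‖Matrix.toEuclideanLin M.toBlocks₁₁ v‖^2
      = ∑ i, ((Matrix.toEuclideanLin M (ext1 v)) (Sum.inl i))^2 := by
        rw [enorm_sq]; exact Finset.sum_congr rfl fun i _ => by rw [toEL_ext1_coord_inl]
    _ ≤ ‖Matrix.toEuclideanLin M (ext1 v)‖^2 := by
        rw [enorm_sq, Fintype.sum_sum_type]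
        have : (0:ℝ) ≤ ∑ i : b, ((Matrix.toEuclideanLin M (ext1 v)) (Sum.inr i))^2 := by
          positivity
        linarith
    _ ≤ (sNorm M * ‖ext1 (d := d) v‖)^2 := by
        apply pow_le_pow_left₀ (norm_nonneg _) (toEL_apply_norm_le _ _)

lemma sNorm_toBlocks₁₂_le (M : Matrix (a ⊕ b) (c ⊕ d) ℝ) : sNorm M.toBlocks₁₂ ≤ sNorm M := by
  apply sNorm_le_bound _ _ (sNorm_nonneg M)
  intro v
  apply norm_le_of_sq_le (norm_nonneg _) (mul_nonneg (sNorm_nonneg M) (norm_nonneg v))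
  rw [mul_pow, ← norm_ext2 (c := c) v, ← mul_pow]
  calc ‖Matrix.toEuclideanLin M.toBlocks₁₂ v‖^2
      = ∑ i, ((Matrix.toEuclideanLin M (ext2 v)) (Sum.inl i))^2 := by
        rw [enorm_sq]; exact Finset.sum_congr rfl fun i _ => by rw [toEL_ext2_coord_inl]
    _ ≤ ‖Matrix.toEuclideanLin M (ext2 v)‖^2 := by
        rw [enorm_sq, Fintype.sum_sum_type]
        have : (0:ℝ) ≤ ∑ i : b, ((Matrix.toEuclideanLin M (ext2 v)) (Sum.inr i))^2 := by
          positivity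
        linarith
    _ ≤ (sNorm M * ‖ext2 (c := c) v‖)^2 := by
        apply pow_le_pow_left₀ (norm_nonneg _) (toEL_apply_norm_le _ _)

lemma sNorm_toBlocks₂₂_le (M : Matrix (a ⊕ b) (c ⊕ d) ℝ) : sNorm M.toBlocks₂₂ ≤ sNorm M := by
  apply sNorm_le_bound _ _ (sNorm_nonneg M)
  intro v
  apply norm_le_of_sq_le (norm_nonneg _) (mul_nonneg (sNorm_nonneg M) (norm_nonneg v))
  rw [mul_pow, ← norm_ext2 (c := c) v, ← mul_pow]
  calc ‖Matrix.toEuclideanLin M.toBlocks₂₂ v‖^2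
      = ∑ i, ((Matrix.toEuclideanLin M (ext2 v)) (Sum.inr i))^2 := by
        rw [enorm_sq]; exact Finset.sum_congr rfl fun i _ => by rw [toEL_ext2_coord_inr]
    _ ≤ ‖Matrix.toEuclideanLin M (ext2 v)‖^2 := by
        rw [enorm_sq, Fintype.sum_sum_type]
        have : (0:ℝ) ≤ ∑ i : a, ((Matrix.toEuclideanLin M (ext2 v)) (Sum.inl i))^2 := by
          positivity
        linarith
    _ ≤ (sNorm M * ‖ext2 (c := c) v‖)^2 := by
        apply pow_le_pow_left₀ (norm_nonneg _) (toEL_apply_norm_le _ _)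

end blocks

-- now projMat lemmas
variable {N : ℕ} (V : Submodule ℝ (EuclideanSpace ℝ (Fin N)))

lemma toEL_projMat :
    Matrix.toEuclideanLin (projMat V) = V.subtype ∘ₗ (V.orthogonalProjectionOnto).toLinearMap :=
  LinearEquiv.apply_symm_apply _ _

lemma projMat_apply (v : EuclideanSpace ℝ (Fin N)) :
    Matrix.toEuclideanLin (projMat V) v = V.orthogonalProjectionOnto v := by
  rw [toEL_projMat]; rfl

lemma sNorm_projMat_le : sNorm (projMat V) ≤ 1 := by
  apply sNorm_le_bound _ _ zero_le_one
  intro v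
  rw [projMat_apply, one_mul]
  calc ‖(↑(V.orthogonalProjectionOnto v) : EuclideanSpace ℝ (Fin N))‖
      = ‖V.orthogonalProjectionOnto v‖ := rfl
    _ ≤ ‖V.orthogonalProjectionOnto‖ * ‖v‖ := (V.orthogonalProjectionOnto).le_opNorm v
    _ ≤ 1 * ‖v‖ := by
        apply mul_le_mul_of_nonneg_right (Submodule.orthogonalProjectionOnto_norm_le (K := V)) (norm_nonneg v)
    _ = ‖v‖ := one_mul _

lemma sNorm_one_sub_projMat_le : sNorm (1 - projMat V) ≤ 1 := by
  apply sNorm_le_bound _ _ zero_le_one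
  intro v
  rw [map_sub, one_mul, LinearMap.sub_apply, projMat_apply]
  have h1 : Matrix.toEuclideanLin (1 : Matrix (Fin N) (Fin N) ℝ) v = v := by
    apply (WithLp.equiv 2 (Fin N → ℝ)).injective
    funext i
    show (Matrix.toEuclideanLin (1 : Matrix (Fin N) (Fin N) ℝ) v) i = v i
    rw [toEL_coord]
    simp [Matrix.one_apply]
  rw [h1]
  have hmem1 : (↑(V.orthogonalProjectionOnto v) : EuclideanSpace ℝ (Fin N)) ∈ V := SetLike.coe_mem _
  have hmem2 : v - V.orthogonalProjectionOnto v ∈ Vᗮ := Submodule.sub_starProjection_mem_orthogonal (K := V) v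
  have hinner : (inner ℝ (↑(V.orthogonalProjectionOnto v) : EuclideanSpace ℝ (Fin N))
      (v - V.orthogonalProjectionOnto v) : ℝ) = 0 :=
    Submodule.inner_right_of_mem_orthogonal hmem1 hmem2
  have hpyth := norm_add_sq_eq_norm_sq_add_norm_sq_of_inner_eq_zero _ _ hinner
  have hsum : (↑(V.orthogonalProjectionOnto v) : EuclideanSpace ℝ (Fin N)) +
      (v - V.orthogonalProjectionOnto v) = v := by abel
  rw [hsum] at hpyth
  nlinarith [norm_nonneg (v - (V.orthogonalProjectionOnto v : EuclideanSpace ℝ (Fin N))),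
    norm_nonneg v, norm_nonneg (V.orthogonalProjectionOnto v : EuclideanSpace ℝ (Fin N))]

lemma toEL_mul_apply (A : Matrix m n ℝ) (B : Matrix n k ℝ) (v : EuclideanSpace ℝ k) :
    Matrix.toEuclideanLin (A * B) v = Matrix.toEuclideanLin A (Matrix.toEuclideanLin B v) := by
  simp [Matrix.toEuclideanLin_apply, Matrix.mulVec_mulVec]

lemma projMat_mul_self : projMat V * projMat V = projMat V := by
  apply Matrix.toEuclideanLin.injective
  apply LinearMap.ext
  intro v
  simp only [toEL_mul_apply, projMat_apply]
  exact congrArg _ (Submodule.orthogonalProjectionOnto_mem_subspace_eq_self _)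

lemma projMat_transpose : (projMat V)ᵀ = projMat V := by
  have h : (projMat V)ᵀ = (projMat V)ᴴ := by
    ext i j; simp [Matrix.conjTranspose_apply]
  rw [h]
  apply Matrix.toEuclideanLin.injective
  rw [Matrix.toEuclideanLin_conjTranspose_eq_adjoint, toEL_projMat]
  have h2 : V.subtype ∘ₗ (V.orthogonalProjectionOnto).toLinearMap =
      ((V.subtypeL ∘L V.orthogonalProjectionOnto) : _ →L[ℝ] _).toLinearMap := rfl
  rw [h2, LinearMap.adjoint_eq_toCLM_adjoint]
  congr 1
  have h3 : LinearMap.toContinuousLinearMap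
      ((V.subtypeL ∘L V.orthogonalProjectionOnto : _ →L[ℝ] _) : _ →ₗ[ℝ] _) =
      V.subtypeL ∘L V.orthogonalProjectionOnto := by
    ext v; rfl
  rw [h3]
  exact (isSelfAdjoint_starProjection V).adjoint_eq

section tp
variable {p q : ℕ}

lemma sNorm_sub_le (A B : Matrix (Fin p) (Fin q) ℝ) : sNorm (A - B) ≤ sNorm A + sNorm B := by
  rw [sub_eq_add_neg]
  exact (sNorm_add_le A (-B)).trans (by rw [sNorm_neg])

lemma tanProj_idem (N M : Matrix (Fin p) (Fin q) ℝ) :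
    tanProj N (tanProj N M) = tanProj N M := by
  unfold tanProj
  set P := projMat (colSpace N) with hPdef
  set Q := projMat (colSpace Nᵀ) with hQdef
  have hP : P * P = P := projMat_mul_self _
  have hQ : Q * Q = Q := projMat_mul_self _
  have hQ' : ∀ X : Matrix (Fin p) (Fin q) ℝ, X * Q * Q = X * Q := fun X => by
    rw [Matrix.mul_assoc, hQ]
  simp only [Matrix.mul_add, Matrix.mul_sub, Matrix.add_mul, Matrix.sub_mul, ← Matrix.mul_assoc, hP, hQ']
  abel

lemma tanProj_add (N A B : Matrix (Fin p) (Fin q) ℝ) :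
    tanProj N (A + B) = tanProj N A + tanProj N B := by
  unfold tanProj
  simp only [Matrix.mul_add, Matrix.add_mul]
  abel

lemma sNorm_tanProj_le (N M : Matrix (Fin p) (Fin q) ℝ) :
    sNorm (tanProj N M) ≤ 2 * sNorm M := by
  have key : tanProj N M = projMat (colSpace N) * M +
      ((1 - projMat (colSpace N)) * M) * projMat (colSpace Nᵀ) := by
    unfold tanProj
    simp only [Matrix.sub_mul, Matrix.one_mul]
    abel
  rw [key]
  calc sNorm _ ≤ sNorm (projMat (colSpace N) * M) +
      sNorm (((1 - projMat (colSpace N)) * M) * projMat (colSpace Nᵀ)) := sNorm_add_le _ _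
    _ ≤ sNorm M + sNorm M := by
        apply add_le_add
        · calc sNorm (projMat (colSpace N) * M) ≤ sNorm (projMat (colSpace N)) * sNorm M :=
              sNorm_mul_le _ _
            _ ≤ 1 * sNorm M :=
              mul_le_mul_of_nonneg_right (sNorm_projMat_le _) (sNorm_nonneg M)
            _ = sNorm M := one_mul _
        · calc sNorm (((1 - projMat (colSpace N)) * M) * projMat (colSpace Nᵀ))
              ≤ sNorm ((1 - projMat (colSpace N)) * M) * sNorm (projMat (colSpace Nᵀ)) :=
              sNorm_mul_le _ _
            _ ≤ sNorm ((1 - projMat (colSpace N)) * M) * 1 := by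
              apply mul_le_mul_of_nonneg_left (sNorm_projMat_le _) (sNorm_nonneg _)
            _ = sNorm ((1 - projMat (colSpace N)) * M) := mul_one _
            _ ≤ sNorm (1 - projMat (colSpace N)) * sNorm M := sNorm_mul_le _ _
            _ ≤ 1 * sNorm M :=
              mul_le_mul_of_nonneg_right (sNorm_one_sub_projMat_le _) (sNorm_nonneg M)
            _ = sNorm M := one_mul _
    _ = 2 * sNorm M := by ring

lemma tanProj_isSymm {N M : Matrix (Fin p) (Fin p) ℝ} (hN : N.IsSymm) (hM : M.IsSymm) :
    (tanProj N M).IsSymm := by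
  unfold tanProj
  have hcs : colSpace Nᵀ = colSpace N := by rw [hN.eq]
  rw [hcs]
  rw [Matrix.IsSymm]
  rw [Matrix.transpose_sub, Matrix.transpose_add, Matrix.transpose_mul, Matrix.transpose_mul,
    Matrix.transpose_mul, Matrix.transpose_mul, projMat_transpose, hM.eq]
  rw [← mul_assoc]
  abel

lemma suppProj_idem {S A : Matrix (Fin p) (Fin p) ℝ} :
    suppProj S (suppProj S A) = suppProj S A := by
  ext i j
  simp only [suppProj, Matrix.of_apply]
  split <;> simp_all

lemma suppProj_add (S A B : Matrix (Fin p) (Fin p) ℝ) :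
    suppProj S (A + B) = suppProj S A + suppProj S B := by
  ext i j
  simp only [suppProj, Matrix.of_apply, Matrix.add_apply]
  split <;> simp_all

lemma suppProj_isSymm {S A : Matrix (Fin p) (Fin p) ℝ} (hS : S.IsSymm) (hA : A.IsSymm) :
    (suppProj S A).IsSymm := by
  rw [Matrix.IsSymm]
  ext i j
  simp only [suppProj, Matrix.transpose_apply, Matrix.of_apply]
  rw [← hS.apply, ← hA.apply]

end tp

section linfs
variable {m n : Type*} [Fintype m] [Fintype n] [DecidableEq m] [DecidableEq n]

lemma abs_le_linf (M : Matrix m n ℝ) (i : m) (j : n) : |M i j| ≤ linf M := by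
  unfold linf
  calc |M i j| ≤ ⨆ j', |M i j'| :=
        le_ciSup (f := fun j' => |M i j'|)
          (Set.Finite.bddAbove (Set.finite_range _)) j
    _ ≤ ⨆ i', ⨆ j', |M i' j'| :=
        le_ciSup (f := fun i' => ⨆ j', |M i' j'|)
          (Set.Finite.bddAbove (Set.finite_range _)) i

lemma linf_le (M : Matrix m n ℝ) (c : ℝ) (hc : 0 ≤ c) (h : ∀ i j, |M i j| ≤ c) :
    linf M ≤ c :=
  Real.iSup_le (fun i => Real.iSup_le (h i) hc) hc

lemma linf_nonneg (M : Matrix m n ℝ) : 0 ≤ linf M :=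
  Real.iSup_nonneg fun i => Real.iSup_nonneg fun j => abs_nonneg _

lemma linf_zero : linf (0 : Matrix m n ℝ) = 0 := by
  apply le_antisymm
  · exact linf_le _ 0 le_rfl (by simp)
  · exact linf_nonneg _

lemma linf_sub_le (A B : Matrix m n ℝ) : linf (A - B) ≤ linf A + linf B := by
  apply linf_le _ _ (add_nonneg (linf_nonneg A) (linf_nonneg B))
  intro i j
  calc |(A - B) i j| = |A i j - B i j| := by rw [Matrix.sub_apply]
    _ ≤ |A i j| + |B i j| := abs_sub _ _
    _ ≤ linf A + linf B := add_le_add (abs_le_linf A i j) (abs_le_linf B i j)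

lemma linf_add_le (A B : Matrix m n ℝ) : linf (A + B) ≤ linf A + linf B := by
  apply linf_le _ _ (add_nonneg (linf_nonneg A) (linf_nonneg B))
  intro i j
  calc |(A + B) i j| = |A i j + B i j| := by rw [Matrix.add_apply]
    _ ≤ |A i j| + |B i j| := abs_add_le _ _
    _ ≤ linf A + linf B := add_le_add (abs_le_linf A i j) (abs_le_linf B i j)

lemma linf_le_sNorm (M : Matrix m n ℝ) : linf M ≤ sNorm M := by
  apply linf_le _ _ (sNorm_nonneg M)
  intro i j
  have h1 : (Matrix.toEuclideanLin M (EuclideanSpace.single j 1)) i = M i j := by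
    simp [Matrix.toEuclideanLin_apply, Matrix.mulVec, dotProduct,
      EuclideanSpace.single_apply]
  calc |M i j| = |(Matrix.toEuclideanLin M (EuclideanSpace.single j 1)) i| := by rw [h1]
    _ ≤ ‖Matrix.toEuclideanLin M (EuclideanSpace.single j 1)‖ := by
        rw [EuclideanSpace.norm_eq, ← Real.sqrt_sq (abs_nonneg _)]
        apply Real.sqrt_le_sqrt
        rw [sq_abs]
        calc _ ≤ ∑ i', ((Matrix.toEuclideanLin M (EuclideanSpace.single j 1)) i')^2 :=
              Finset.single_le_sum (fun i' _ => sq_nonneg _) (Finset.mem_univ i)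
          _ = _ := by simp [sq_abs]
    _ ≤ sNorm M * ‖EuclideanSpace.single j (1:ℝ)‖ := toEL_apply_norm_le _ _
    _ = sNorm M := by simp [EuclideanSpace.norm_single]

lemma linf_suppProj_le {p : ℕ} (S A : Matrix (Fin p) (Fin p) ℝ) :
    linf (suppProj S A) ≤ linf A := by
  apply linf_le _ _ (linf_nonneg A)
  intro i j
  simp only [suppProj, Matrix.of_apply]
  split
  · simpa using linf_nonneg A
  · exact abs_le_linf A i j

end linfs

section blocks
variable {a b c d : Type*} [Fintype a] [Fintype b] [Fintype c] [Fintype d]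
  [DecidableEq a] [DecidableEq b] [DecidableEq c] [DecidableEq d]

def res1 (v : EuclideanSpace ℝ (c ⊕ d)) : EuclideanSpace ℝ c :=
  (WithLp.equiv 2 (c → ℝ)).symm (fun i => v (Sum.inl i))
def res2 (v : EuclideanSpace ℝ (c ⊕ d)) : EuclideanSpace ℝ d :=
  (WithLp.equiv 2 (d → ℝ)).symm (fun i => v (Sum.inr i))

@[simp] lemma res1_apply (v : EuclideanSpace ℝ (c ⊕ d)) (i : c) :
    res1 v i = v (Sum.inl i) := rfl
@[simp] lemma res2_apply (v : EuclideanSpace ℝ (c ⊕ d)) (i : d) :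
    res2 v i = v (Sum.inr i) := rfl

lemma norm_res_sq (v : EuclideanSpace ℝ (c ⊕ d)) :
    ‖v‖^2 = ‖res1 v‖^2 + ‖res2 v‖^2 := by
  rw [enorm_sq, enorm_sq, enorm_sq, Fintype.sum_sum_type]
  simp

lemma toEL_fromBlocks_inl (A : Matrix a c ℝ) (B : Matrix a d ℝ) (C : Matrix b c ℝ)
    (D : Matrix b d ℝ) (v : EuclideanSpace ℝ (c ⊕ d)) (i : a) :
    (Matrix.toEuclideanLin (Matrix.fromBlocks A B C D) v) (Sum.inl i)
      = (Matrix.toEuclideanLin A (res1 v)) i + (Matrix.toEuclideanLin B (res2 v)) i := by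
  rw [toEL_coord, toEL_coord, toEL_coord, Fintype.sum_sum_type]
  simp [Matrix.fromBlocks]

lemma toEL_fromBlocks_inr (A : Matrix a c ℝ) (B : Matrix a d ℝ) (C : Matrix b c ℝ)
    (D : Matrix b d ℝ) (v : EuclideanSpace ℝ (c ⊕ d)) (i : b) :
    (Matrix.toEuclideanLin (Matrix.fromBlocks A B C D) v) (Sum.inr i)
      = (Matrix.toEuclideanLin C (res1 v)) i + (Matrix.toEuclideanLin D (res2 v)) i := by
  rw [toEL_coord, toEL_coord, toEL_coord, Fintype.sum_sum_type]
  simp [Matrix.fromBlocks]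

lemma sNorm_fromBlocks_diag1 (A : Matrix a a ℝ) :
    sNorm (Matrix.fromBlocks A 0 0 (0 : Matrix b b ℝ)) ≤ sNorm A := by
  apply sNorm_le_bound _ _ (sNorm_nonneg A)
  intro v
  apply norm_le_of_sq_le (norm_nonneg _) (mul_nonneg (sNorm_nonneg A) (norm_nonneg v))
  rw [mul_pow]
  calc ‖Matrix.toEuclideanLin (Matrix.fromBlocks A 0 0 (0 : Matrix b b ℝ)) v‖^2
      = ∑ i : a, ((Matrix.toEuclideanLin A (res1 v)) i)^2 := by
        rw [enorm_sq, Fintype.sum_sum_type]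
        have h1 : ∀ i : a, ((Matrix.toEuclideanLin (Matrix.fromBlocks A 0 0 (0 : Matrix b b ℝ)) v)
            (Sum.inl i))^2 = ((Matrix.toEuclideanLin A (res1 v)) i)^2 := fun i => by
          rw [toEL_fromBlocks_inl]; simp
        have h2 : ∀ i : b, ((Matrix.toEuclideanLin (Matrix.fromBlocks A 0 0 (0 : Matrix b b ℝ)) v)
            (Sum.inr i))^2 = 0 := fun i => by
          rw [toEL_fromBlocks_inr]; simp
        rw [Finset.sum_congr rfl fun i _ => h1 i, Finset.sum_congr rfl fun i _ => h2 i]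
        simp
    _ = ‖Matrix.toEuclideanLin A (res1 v)‖^2 := (enorm_sq _).symm
    _ ≤ (sNorm A * ‖res1 v‖)^2 := by
        apply pow_le_pow_left₀ (norm_nonneg _) (toEL_apply_norm_le _ _)
    _ ≤ sNorm A^2 * ‖v‖^2 := by
        rw [mul_pow]
        apply mul_le_mul_of_nonneg_left _ (sq_nonneg _)
        rw [norm_res_sq v]
        have := sq_nonneg ‖res2 v‖
        linarith

lemma sNorm_fromBlocks_offdiag (K : Matrix a b ℝ) :
    sNorm (Matrix.fromBlocks 0 K Kᵀ 0) ≤ sNorm K := by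
  apply sNorm_le_bound _ _ (sNorm_nonneg K)
  intro v
  apply norm_le_of_sq_le (norm_nonneg _) (mul_nonneg (sNorm_nonneg K) (norm_nonneg v))
  rw [mul_pow]
  calc ‖Matrix.toEuclideanLin (Matrix.fromBlocks 0 K Kᵀ 0) v‖^2
      = ∑ i : a, ((Matrix.toEuclideanLin K (res2 v)) i)^2
        + ∑ i : b, ((Matrix.toEuclideanLin Kᵀ (res1 v)) i)^2 := by
        rw [enorm_sq, Fintype.sum_sum_type]
        congr 1
        · exact Finset.sum_congr rfl fun i _ => by rw [toEL_fromBlocks_inl]; simp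
        · exact Finset.sum_congr rfl fun i _ => by rw [toEL_fromBlocks_inr]; simp
    _ = ‖Matrix.toEuclideanLin K (res2 v)‖^2 + ‖Matrix.toEuclideanLin Kᵀ (res1 v)‖^2 := by
        rw [enorm_sq, enorm_sq]
    _ ≤ (sNorm K * ‖res2 v‖)^2 + (sNorm Kᵀ * ‖res1 v‖)^2 := by
        apply add_le_add
        · exact pow_le_pow_left₀ (norm_nonneg _) (toEL_apply_norm_le _ _) 2
        · exact pow_le_pow_left₀ (norm_nonneg _) (toEL_apply_norm_le _ _) 2
    _ = sNorm K^2 * (‖res1 v‖^2 + ‖res2 v‖^2) := by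
        rw [sNorm_transpose]; ring
    _ = sNorm K^2 * ‖v‖^2 := by rw [norm_res_sq v]

end blocks

section phi
variable {p q : ℕ} {δ γ : ℝ}

lemma le_Phi₁ (Z : Quad p q) : linf Z.1 / δ ≤ Phi δ γ Z :=
  le_max_of_le_left (le_max_left _ _)
lemma le_Phi₂ (Z : Quad p q) : sNorm Z.2.1 ≤ Phi δ γ Z :=
  le_max_of_le_left (le_max_right _ _)
lemma le_Phi₃ (Z : Quad p q) : sNorm Z.2.2.1 / γ ≤ Phi δ γ Z :=
  le_max_of_le_right (le_max_left _ _)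
lemma le_Phi₄ (Z : Quad p q) : sNorm Z.2.2.2 ≤ Phi δ γ Z :=
  le_max_of_le_right (le_max_right _ _)

lemma Phi_nonneg (Z : Quad p q) : 0 ≤ Phi δ γ Z :=
  (sNorm_nonneg Z.2.2.2).trans (le_Phi₄ Z)

lemma Phi_le {Z : Quad p q} {c : ℝ} (h1 : linf Z.1 / δ ≤ c) (h2 : sNorm Z.2.1 ≤ c)
    (h3 : sNorm Z.2.2.1 / γ ≤ c) (h4 : sNorm Z.2.2.2 ≤ c) : Phi δ γ Z ≤ c :=
  max_le (max_le h1 h2) (max_le h3 h4)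

lemma Phi_sub_le (hδ : 0 < δ) (hγ : 0 < γ) (X Y : Quad p q) :
    Phi δ γ (X - Y) ≤ Phi δ γ X + Phi δ γ Y := by
  apply Phi_le
  · show linf (X.1 - Y.1) / δ ≤ _
    calc linf (X.1 - Y.1) / δ ≤ (linf X.1 + linf Y.1) / δ := by
          apply div_le_div_of_nonneg_right (linf_sub_le _ _) hδ.le
      _ = linf X.1 / δ + linf Y.1 / δ := add_div _ _ _
      _ ≤ _ := add_le_add (le_Phi₁ X) (le_Phi₁ Y)
  · show sNorm (X.2.1 - Y.2.1) ≤ _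
    exact (sNorm_sub_le _ _).trans (add_le_add (le_Phi₂ X) (le_Phi₂ Y))
  · show sNorm (X.2.2.1 - Y.2.2.1) / γ ≤ _
    calc sNorm (X.2.2.1 - Y.2.2.1) / γ ≤ (sNorm X.2.2.1 + sNorm Y.2.2.1) / γ := by
          apply div_le_div_of_nonneg_right (sNorm_sub_le _ _) hγ.le
      _ = sNorm X.2.2.1 / γ + sNorm Y.2.2.1 / γ := add_div _ _ _
      _ ≤ _ := add_le_add (le_Phi₃ X) (le_Phi₃ Y)
  · show sNorm (X.2.2.2 - Y.2.2.2) ≤ _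
    exact (sNorm_sub_le _ _).trans (add_le_add (le_Phi₄ X) (le_Phi₄ Y))

lemma Phi_add_le (hδ : 0 < δ) (hγ : 0 < γ) (X Y : Quad p q) :
    Phi δ γ (X + Y) ≤ Phi δ γ X + Phi δ γ Y := by
  apply Phi_le
  · show linf (X.1 + Y.1) / δ ≤ _
    calc linf (X.1 + Y.1) / δ ≤ (linf X.1 + linf Y.1) / δ := by
          apply div_le_div_of_nonneg_right (linf_add_le _ _) hδ.le
      _ = linf X.1 / δ + linf Y.1 / δ := add_div _ _ _
      _ ≤ _ := add_le_add (le_Phi₁ X) (le_Phi₁ Y)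
  · show sNorm (X.2.1 + Y.2.1) ≤ _
    exact (sNorm_add_le _ _).trans (add_le_add (le_Phi₂ X) (le_Phi₂ Y))
  · show sNorm (X.2.2.1 + Y.2.2.1) / γ ≤ _
    calc sNorm (X.2.2.1 + Y.2.2.1) / γ ≤ (sNorm X.2.2.1 + sNorm Y.2.2.1) / γ := by
          apply div_le_div_of_nonneg_right (sNorm_add_le _ _) hγ.le
      _ = sNorm X.2.2.1 / γ + sNorm Y.2.2.1 / γ := add_div _ _ _
      _ ≤ _ := add_le_add (le_Phi₃ X) (le_Phi₃ Y)
  · show sNorm (X.2.2.2 + Y.2.2.2) ≤ _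
    exact (sNorm_add_le _ _).trans (add_le_add (le_Phi₄ X) (le_Phi₄ Y))

lemma Phi_projHstar_le (hδ : 0 < δ) (hγ : 0 < γ) (S L : Matrix (Fin p) (Fin p) ℝ)
    (K : Matrix (Fin p) (Fin q) ℝ) (W : Quad p q) :
    Phi δ γ (projHstar S L K W) ≤ 2 * Phi δ γ W := by
  have hW := Phi_nonneg (δ := δ) (γ := γ) W
  apply Phi_le
  · show linf (suppProj S W.1) / δ ≤ _
    calc linf (suppProj S W.1) / δ ≤ linf W.1 / δ :=
          div_le_div_of_nonneg_right (linf_suppProj_le _ _) hδ.le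
      _ ≤ Phi δ γ W := le_Phi₁ W
      _ ≤ 2 * Phi δ γ W := by linarith
  · show sNorm (tanProj L W.2.1) ≤ _
    exact (sNorm_tanProj_le _ _).trans (by have := le_Phi₂ (δ := δ) (γ := γ) W; linarith)
  · show sNorm (tanProj K W.2.2.1) / γ ≤ _
    calc sNorm (tanProj K W.2.2.1) / γ ≤ (2 * sNorm W.2.2.1) / γ :=
          div_le_div_of_nonneg_right (sNorm_tanProj_le _ _) hγ.le
      _ = 2 * (sNorm W.2.2.1 / γ) := by ring
      _ ≤ 2 * Phi δ γ W := by have := le_Phi₃ (δ := δ) (γ := γ) W; linarith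
  · show sNorm W.2.2.2 ≤ _
    have := le_Phi₄ (δ := δ) (γ := γ) W; linarith

lemma calA_add (X Y : Quad p q) : calA (X + Y) = calA X + calA Y := by
  unfold calA
  ext (i | i) (j | j) <;>
    simp [Matrix.fromBlocks, Matrix.sub_apply, Matrix.add_apply, Matrix.transpose_apply] <;>
    ring

lemma fisherA_add (S : Matrix (Fin p ⊕ Fin q) (Fin p ⊕ Fin q) ℝ) (X Y : Quad p q) :
    fisherA S (X + Y) = fisherA S X + fisherA S Y := by
  unfold fisherA calAdag
  rw [calA_add, Matrix.mul_add, Matrix.add_mul]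
  refine Prod.ext ?_ (Prod.ext ?_ (Prod.ext ?_ ?_)) <;>
    (ext i j;
     simp [Matrix.toBlocks₁₁, Matrix.toBlocks₁₂, Matrix.toBlocks₂₂, Matrix.add_apply])

lemma projHstar_add (S L : Matrix (Fin p) (Fin p) ℝ) (K : Matrix (Fin p) (Fin q) ℝ)
    (X Y : Quad p q) :
    projHstar S L K (X + Y) = projHstar S L K X + projHstar S L K Y := by
  unfold projHstar
  refine Prod.ext ?_ (Prod.ext ?_ (Prod.ext ?_ ?_))
  · exact suppProj_add _ _ _
  · exact tanProj_add _ _ _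
  · exact tanProj_add _ _ _
  · rfl

end phi


end helpers

set_option maxHeartbeats 1600000 in
/-- Proposition 1 of the paper: under the minimum-gain condition on the Fisher
information restricted to `ℍ⋆`, any `Δ` that is sparse in the first component, nearly tangent in
the low-rank components, and has `Φ_{δ,γ}(A(Δ)) ≤ 5λ`, satisfies
`Φ_{δ,γ}(Δ) ≤ (12/α + 1/ψ²)·λ`. -/
theorem stmt_7 (p q : ℕ) (hp : 1 ≤ p) (hq : 1 ≤ q)
    (δ γ lam ωY ωYX α : ℝ) (hδ : 0 < δ) (hγ : 0 < γ) (hlam : 0 < lam)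
    (hωY : ωY ∈ Set.Ioo (0 : ℝ) 1) (hωYX : ωYX ∈ Set.Ioo (0 : ℝ) 1) (hα : 0 < α)
    (m : ℝ) (hm : m = max (1 / δ) (max 1 (1 / γ)))
    (Sstar Lstar : Matrix (Fin p) (Fin p) ℝ) (hSsymm : Sstar.IsSymm) (hLsymm : Lstar.IsSymm)
    (Kstar : Matrix (Fin p) (Fin q) ℝ) (Xstar : Matrix (Fin q) (Fin q) ℝ)
    (Θstar : Matrix (Fin p ⊕ Fin q) (Fin p ⊕ Fin q) ℝ)
    (hΘdef : Θstar = Matrix.fromBlocks (Sstar - Lstar) Kstar Kstarᵀ Xstar)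
    (hΘpd : Θstar.PosDef)
    (ψ : ℝ) (hψ : ψ = sNorm Θstar⁻¹)
    (hgain : ∀ Z : Quad p q, memHstar Sstar Lstar Kstar Z →
      α * Phi δ γ Z ≤ Phi δ γ (projHstar Sstar Lstar Kstar (fisherA Θstar⁻¹ Z)))
    (Δ : Quad p q)
    (hΔS : Δ.1.IsSymm) (hΔL : Δ.2.1.IsSymm) (hΔO : Δ.2.2.2.IsSymm)
    (ha : ∀ i j, Sstar i j = 0 → Δ.1 i j = 0)
    (hb : sNorm (Δ.2.1 - tanProj Lstar Δ.2.1) ≤ ωY * lam / (2 * m * ψ ^ 2))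
    (hc : sNorm (Δ.2.2.1 - tanProj Kstar Δ.2.2.1) ≤ ωYX * lam / (2 * m * ψ ^ 2))
    (hd : Phi δ γ (fisherA Θstar⁻¹ Δ) ≤ 5 * lam) :
    Phi δ γ Δ ≤ (12 / α + 1 / ψ ^ 2) * lam := by
  obtain ⟨hωY0, hωY1⟩ := hωY
  obtain ⟨hωYX0, hωYX1⟩ := hωYX
  -- basic positivity facts
  have hm1 : (1 : ℝ) ≤ m := hm ▸ le_max_of_le_right (le_max_left _ _)
  have hmδ : 1 / δ ≤ m := hm ▸ le_max_left _ _
  have hmγ : 1 / γ ≤ m := hm ▸ le_max_of_le_right (le_max_right _ _)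
  have hm0 : 0 < m := lt_of_lt_of_le one_pos hm1
  have hψ0 : 0 < ψ := by
    have hne : Θstar⁻¹ ≠ 0 := by
      intro h0
      have hinv : Θstar⁻¹ * Θstar = 1 := Matrix.nonsing_inv_mul _ (isUnit_iff_ne_zero.mpr hΘpd.det_pos.ne')
      rw [h0, Matrix.zero_mul] at hinv
      have : (0 : Matrix (Fin p ⊕ Fin q) (Fin p ⊕ Fin q) ℝ) (Sum.inl ⟨0, hp⟩) (Sum.inl ⟨0, hp⟩) =
          (1 : Matrix (Fin p ⊕ Fin q) (Fin p ⊕ Fin q) ℝ) (Sum.inl ⟨0, hp⟩) (Sum.inl ⟨0, hp⟩) := by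
        rw [hinv]
      simp [Matrix.one_apply] at this
    rcases lt_or_eq_of_le (sNorm_nonneg Θstar⁻¹) with h | h
    · exact hψ ▸ h
    · exact absurd ((sNorm_eq_zero_iff _).mp h.symm) hne
  have hψsq : 0 < ψ ^ 2 := by positivity
  have hαne : α ≠ 0 := hα.ne'
  have hψne : ψ ^ 2 ≠ 0 := hψsq.ne'
  have hmne : m ≠ 0 := hm0.ne'
  have h2m : (0:ℝ) < 2 * m * ψ ^ 2 := by positivity
  -- decomposition
  set CL := Δ.2.1 - tanProj Lstar Δ.2.1 with hCLdef
  set CK := Δ.2.2.1 - tanProj Kstar Δ.2.2.1 with hCKdef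
  set Z : Quad p q := (Δ.1, tanProj Lstar Δ.2.1, tanProj Kstar Δ.2.2.1, Δ.2.2.2) with hZdef
  set Cq : Quad p q := (0, CL, CK, 0) with hCqdef
  have hΔZC : Δ = Z + Cq := by
    refine Prod.ext ?_ (Prod.ext ?_ (Prod.ext ?_ ?_)) <;>
      simp [hZdef, hCqdef, hCLdef, hCKdef]
  -- Z is in H⋆
  have hsupp : suppProj Sstar Δ.1 = Δ.1 := by
    ext i j
    simp only [suppProj, Matrix.of_apply]
    split
    · exact (ha i j (by assumption)).symm
    · rfl
  have hmem : memHstar Sstar Lstar Kstar Z :=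
    ⟨hΔS, hsupp, tanProj_isSymm hLsymm hΔL, tanProj_idem _ _, tanProj_idem _ _, hΔO⟩
  have hgainZ := hgain Z hmem
  -- splitting of the projected Fisher image
  have hsplit : projHstar Sstar Lstar Kstar (fisherA Θstar⁻¹ Z) =
      projHstar Sstar Lstar Kstar (fisherA Θstar⁻¹ Δ) -
      projHstar Sstar Lstar Kstar (fisherA Θstar⁻¹ Cq) := by
    rw [hΔZC, fisherA_add, projHstar_add]
    abel
  -- bound on Φ(A C)
  have hCLb : sNorm CL ≤ ωY * lam / (2 * m * ψ ^ 2) := hb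
  have hCKb : sNorm CK ≤ ωYX * lam / (2 * m * ψ ^ 2) := hc
  have hcalACq : sNorm (calA Cq) ≤ sNorm CL + sNorm CK := by
    have hdecomp : calA Cq = Matrix.fromBlocks (-CL) 0 0 0 +
        Matrix.fromBlocks 0 CK CKᵀ 0 := by
      unfold calA
      ext (i | i) (j | j) <;>
        simp [Matrix.fromBlocks, hCqdef, Matrix.sub_apply, Matrix.add_apply,
          Matrix.neg_apply, Matrix.transpose_apply]
    rw [hdecomp]
    calc sNorm _ ≤ sNorm (Matrix.fromBlocks (-CL) 0 0 0) +
          sNorm (Matrix.fromBlocks 0 CK CKᵀ 0) := sNorm_add_le _ _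
      _ ≤ sNorm (-CL) + sNorm CK :=
          add_le_add (sNorm_fromBlocks_diag1 _) (sNorm_fromBlocks_offdiag _)
      _ = sNorm CL + sNorm CK := by rw [sNorm_neg]
  have hPhiACq : Phi δ γ (fisherA Θstar⁻¹ Cq) ≤ m * (ψ ^ 2 * sNorm (calA Cq)) := by
    have hWb : sNorm (Θstar⁻¹ * calA Cq * Θstar⁻¹) ≤ ψ ^ 2 * sNorm (calA Cq) := by
      calc sNorm (Θstar⁻¹ * calA Cq * Θstar⁻¹)
          ≤ sNorm (Θstar⁻¹ * calA Cq) * sNorm Θstar⁻¹ := sNorm_mul_le _ _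
        _ ≤ (sNorm Θstar⁻¹ * sNorm (calA Cq)) * sNorm Θstar⁻¹ :=
            mul_le_mul_of_nonneg_right (sNorm_mul_le _ _) (sNorm_nonneg _)
        _ = ψ ^ 2 * sNorm (calA Cq) := by rw [hψ]; ring
    set W := Θstar⁻¹ * calA Cq * Θstar⁻¹ with hWdef
    have hW0 : 0 ≤ sNorm W := sNorm_nonneg _
    have key : ∀ x : ℝ, x ≤ sNorm W → x ≤ m * (ψ ^ 2 * sNorm (calA Cq)) := by
      intro x hx
      calc x ≤ sNorm W := hx
        _ = 1 * sNorm W := (one_mul _).symm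
        _ ≤ m * sNorm W := mul_le_mul_of_nonneg_right hm1 hW0
        _ ≤ m * (ψ ^ 2 * sNorm (calA Cq)) := mul_le_mul_of_nonneg_left hWb (le_of_lt hm0)
    apply Phi_le
    · show linf W.toBlocks₁₁ / δ ≤ _
      calc linf W.toBlocks₁₁ / δ = linf W.toBlocks₁₁ * (1 / δ) := by ring
        _ ≤ sNorm W * m := by
            apply mul_le_mul ((linf_le_sNorm _).trans (sNorm_toBlocks₁₁_le W)) hmδ
              (by positivity) hW0
        _ = m * sNorm W := mul_comm _ _
        _ ≤ m * (ψ ^ 2 * sNorm (calA Cq)) := mul_le_mul_of_nonneg_left hWb (le_of_lt hm0)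
    · exact key _ (sNorm_toBlocks₁₁_le W)
    · show sNorm W.toBlocks₁₂ / γ ≤ _
      calc sNorm W.toBlocks₁₂ / γ = sNorm W.toBlocks₁₂ * (1 / γ) := by ring
        _ ≤ sNorm W * m := by
            apply mul_le_mul (sNorm_toBlocks₁₂_le W) hmγ (by positivity) hW0
        _ = m * sNorm W := mul_comm _ _
        _ ≤ m * (ψ ^ 2 * sNorm (calA Cq)) := mul_le_mul_of_nonneg_left hWb (le_of_lt hm0)
    · exact key _ (sNorm_toBlocks₂₂_le W)
  have hPhiACq2 : Phi δ γ (fisherA Θstar⁻¹ Cq) ≤ lam := by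
    have h1 : sNorm CL + sNorm CK ≤ (ωY + ωYX) * lam / (2 * m * ψ ^ 2) := by
      rw [add_mul, add_div]
      exact add_le_add hCLb hCKb
    have h2 : m * (ψ ^ 2 * sNorm (calA Cq)) ≤
        m * (ψ ^ 2 * ((ωY + ωYX) * lam / (2 * m * ψ ^ 2))) := by
      apply mul_le_mul_of_nonneg_left _ (le_of_lt hm0)
      apply mul_le_mul_of_nonneg_left (hcalACq.trans h1) (le_of_lt hψsq)
    have h3 : m * (ψ ^ 2 * ((ωY + ωYX) * lam / (2 * m * ψ ^ 2))) = (ωY + ωYX) * lam / 2 := by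
      field_simp
    have h4 : (ωY + ωYX) * lam / 2 ≤ lam := by nlinarith [hlam, hωY1.le, hωYX1.le]
    linarith [hPhiACq]
  -- main gain chain
  have hchain : α * Phi δ γ Z ≤ 12 * lam := by
    have h5 : Phi δ γ (projHstar Sstar Lstar Kstar (fisherA Θstar⁻¹ Z)) ≤
        Phi δ γ (projHstar Sstar Lstar Kstar (fisherA Θstar⁻¹ Δ)) +
        Phi δ γ (projHstar Sstar Lstar Kstar (fisherA Θstar⁻¹ Cq)) := by
      rw [hsplit]
      exact Phi_sub_le hδ hγ _ _
    have h6 : Phi δ γ (projHstar Sstar Lstar Kstar (fisherA Θstar⁻¹ Δ)) ≤ 10 * lam := by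
      calc _ ≤ 2 * Phi δ γ (fisherA Θstar⁻¹ Δ) := Phi_projHstar_le hδ hγ _ _ _ _
        _ ≤ 2 * (5 * lam) := by linarith
        _ = 10 * lam := by ring
    have h7 : Phi δ γ (projHstar Sstar Lstar Kstar (fisherA Θstar⁻¹ Cq)) ≤ 2 * lam := by
      calc _ ≤ 2 * Phi δ γ (fisherA Θstar⁻¹ Cq) := Phi_projHstar_le hδ hγ _ _ _ _
        _ ≤ 2 * lam := by linarith
    linarith [hgainZ]
  have hPhiZ : Phi δ γ Z ≤ 12 * lam / α := by
    rw [le_div_iff₀ hα]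
    linarith [hchain]
  -- bound Φ(C)
  have hPhiCq : Phi δ γ Cq ≤ lam / ψ ^ 2 := by
    apply Phi_le
    · show linf (0 : Matrix (Fin p) (Fin p) ℝ) / δ ≤ _
      rw [linf_zero, zero_div]
      exact div_nonneg hlam.le hψsq.le
    · show sNorm CL ≤ _
      calc sNorm CL ≤ ωY * lam / (2 * m * ψ ^ 2) := hCLb
        _ ≤ lam / ψ ^ 2 := by
            rw [div_le_div_iff₀ h2m hψsq]
            have hkey : ωY * (lam * ψ^2) ≤ m * (lam * ψ^2) :=
              mul_le_mul_of_nonneg_right (hωY1.le.trans hm1) (by positivity)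
            nlinarith [hkey, mul_pos hlam hψsq, mul_pos hm0 (mul_pos hlam hψsq)]
    · show sNorm CK / γ ≤ _
      have hCK0 : 0 ≤ sNorm CK := sNorm_nonneg _
      have hbnn : (0:ℝ) ≤ ωYX * lam / (2 * m * ψ ^ 2) := by
        apply div_nonneg (by nlinarith) h2m.le
      calc sNorm CK / γ = sNorm CK * (1 / γ) := by ring
        _ ≤ (ωYX * lam / (2 * m * ψ ^ 2)) * m :=
            mul_le_mul hCKb hmγ (le_of_lt (by positivity : (0:ℝ) < 1/γ)) hbnn
        _ = ωYX * lam / (2 * ψ ^ 2) := by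
            field_simp
        _ ≤ lam / ψ ^ 2 := by
            rw [div_le_div_iff₀ (by positivity) hψsq]
            have hkey : ωYX * (lam * ψ^2) ≤ 1 * (lam * ψ^2) :=
              mul_le_mul_of_nonneg_right hωYX1.le (by positivity)
            nlinarith [hkey, mul_pos hlam hψsq]
    · show sNorm (0 : Matrix (Fin q) (Fin q) ℝ) ≤ _
      rw [(sNorm_eq_zero_iff _).mpr rfl]
      exact div_nonneg hlam.le hψsq.le
  -- conclude
  calc Phi δ γ Δ = Phi δ γ (Z + Cq) := by rw [← hΔZC]
    _ ≤ Phi δ γ Z + Phi δ γ Cq := Phi_add_le hδ hγ _ _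
    _ ≤ 12 * lam / α + lam / ψ ^ 2 := add_le_add hPhiZ hPhiCq
    _ = (12 / α + 1 / ψ ^ 2) * lam := by field_simp

end
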